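/- Reverse Cauchy–Schwarz inequality in Minkowski space: for every pair of future-directed causal vectors v, w ∈ ℝ^{n+1} one has η(v,w) ≥ √(η(v,v) · η(w,w)). Moreover, if v and w are both future-directed timelike and equality holds, then w = c·v for some real c > 0. -/

import Mathlib

set_option maxHeartbeats 1000000

open scoped RealInnerProductSpace

/-- The Minkowski bilinear form on `ℝ^{n+1}`. -/
def minkEta (n : ℕ) (v w : Fin (n + 1) → ℝ) : ℝ :=
  v 0 * w 0 - ∑ i : Fin n, v i.succ * w i.succ

/-- Reverse Cauchy–Schwarz inequality in Minkowski space: for future-directed causal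
vectors `v, w` one has `η(v,w) ≥ √(η(v,v)·η(w,w))`; if moreover `v, w` are
future-directed timelike and equality holds, then `w = c • v` for some `c > 0`. -/
theorem minkowski_reverse_cauchy_schwarz (n : ℕ) (hn : 1 ≤ n)
    (v w : Fin (n + 1) → ℝ)
    (hv0 : 0 < v 0) (hv : 0 ≤ minkEta n v v)
    (hw0 : 0 < w 0) (hw : 0 ≤ minkEta n w w) :
    minkEta n v w ≥ Real.sqrt (minkEta n v v * minkEta n w w) ∧
      (0 < minkEta n v v → 0 < minkEta n w w →
        minkEta n v w = Real.sqrt (minkEta n v v * minkEta n w w) →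
          ∃ c : ℝ, 0 < c ∧ w = c • v) := by
  set a := v 0 with ha
  set b := w 0 with hb
  set x : EuclideanSpace ℝ (Fin n) := WithLp.toLp 2 (fun i => v i.succ) with hx
  set y : EuclideanSpace ℝ (Fin n) := WithLp.toLp 2 (fun i => w i.succ) with hy
  have hinner : ∀ (p q : EuclideanSpace ℝ (Fin n)), ⟪p, q⟫ = ∑ i, p i * q i := by
    intro p q
    simp [PiLp.inner_apply, RCLike.inner_apply, mul_comm]
  have hvw : minkEta n v w = a * b - ⟪x, y⟫ := by
    rw [hinner]; rfl
  have hvv : minkEta n v v = a ^ 2 - ‖x‖ ^ 2 := by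
    rw [← real_inner_self_eq_norm_sq, hinner]
    simp [minkEta]; ring
  have hww : minkEta n w w = b ^ 2 - ‖y‖ ^ 2 := by
    rw [← real_inner_self_eq_norm_sq, hinner]
    simp [minkEta]; ring
  rw [hvv] at hv
  rw [hww] at hw
  have hxn : (0:ℝ) ≤ ‖x‖ := norm_nonneg _
  have hyn : (0:ℝ) ≤ ‖y‖ := norm_nonneg _
  have hax : ‖x‖ ≤ a := by nlinarith
  have hby : ‖y‖ ≤ b := by nlinarith
  have hcs : ⟪x, y⟫ ≤ ‖x‖ * ‖y‖ := real_inner_le_norm x y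
  have h1 : Real.sqrt ((a ^ 2 - ‖x‖ ^ 2) * (b ^ 2 - ‖y‖ ^ 2)) ≤ a * b - ‖x‖ * ‖y‖ := by
    have h2 : (a ^ 2 - ‖x‖ ^ 2) * (b ^ 2 - ‖y‖ ^ 2) ≤ (a * b - ‖x‖ * ‖y‖) ^ 2 := by
      nlinarith [sq_nonneg (a * ‖y‖ - b * ‖x‖)]
    have := Real.sqrt_le_sqrt h2
    rwa [Real.sqrt_sq (by nlinarith)] at this
  constructor
  · rw [hvw, hvv, hww]
    have : a * b - ‖x‖ * ‖y‖ ≤ a * b - ⟪x, y⟫ := by linarith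
    linarith
  · intro hP hQ heq
    rw [hvv] at hP
    rw [hww] at hQ
    rw [hvw, hvv, hww] at heq
    have ha0 : 0 < a := hv0
    have hinn_eq : ⟪x, y⟫ = ‖x‖ * ‖y‖ := by
      linarith
    have hsq : Real.sqrt ((a ^ 2 - ‖x‖ ^ 2) * (b ^ 2 - ‖y‖ ^ 2)) ^ 2
        = (a ^ 2 - ‖x‖ ^ 2) * (b ^ 2 - ‖y‖ ^ 2) :=
      Real.sq_sqrt (by positivity)
    have hkey : a * ‖y‖ = b * ‖x‖ := by
      have h5 : a * b - ‖x‖ * ‖y‖ = Real.sqrt ((a ^ 2 - ‖x‖ ^ 2) * (b ^ 2 - ‖y‖ ^ 2)) := by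
        linarith
      have h6 : (a * b - ‖x‖ * ‖y‖) ^ 2 = (a ^ 2 - ‖x‖ ^ 2) * (b ^ 2 - ‖y‖ ^ 2) := by
        rw [h5]; exact hsq
      have h3 : (a * ‖y‖ - b * ‖x‖) ^ 2 = 0 := by linear_combination h6
      have h7 : a * ‖y‖ - b * ‖x‖ = 0 := by
        exact sq_eq_zero_iff.mp h3
      linarith
    have hcol : ‖y‖ • x = ‖x‖ • y := (inner_eq_norm_mul_iff_real).mp hinn_eq
    refine ⟨b / a, div_pos hw0 ha0, ?_⟩
    have hyx : y = (b / a) • x := by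
      by_cases hx0 : ‖x‖ = 0
      · have hxz : x = 0 := norm_eq_zero.mp hx0
        have : ‖y‖ = 0 := by
          have : a * ‖y‖ = 0 := by rw [hkey, hx0]; ring
          exact (mul_eq_zero.mp this).resolve_left (by linarith)
        rw [norm_eq_zero.mp this, hxz, smul_zero]
      · have hxp : 0 < ‖x‖ := lt_of_le_of_ne hxn (Ne.symm hx0)
        have hrat : ‖y‖ / ‖x‖ = b / a := by
          field_simp
          nlinarith
        have hthis : (‖y‖ / ‖x‖) • x = y := by
          rw [div_eq_inv_mul, mul_smul, hcol, inv_smul_smul₀ (ne_of_gt hxp)]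
        rw [← hthis, hrat]
    funext i
    refine Fin.cases ?_ ?_ i
    · show w 0 = (b / a) * v 0
      rw [← ha, ← hb]
      field_simp
    · intro j
      show w j.succ = ((b / a) • v) j.succ
      have := congrArg (fun z : EuclideanSpace ℝ (Fin n) => z j) hyx
      simpa [Pi.smul_apply, smul_eq_mul, hx, hy] using this
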